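/- Let E be a metric space, T > 0, and let M : E × [0, T] → ℝ be jointly continuous with M(ω, 0) < a for every ω ∈ E, where a ∈ ℝ. Define τ_a(ω) = inf({t ∈ (0, T] : M(ω, t) > a} ∪ {T}) and τ̲_a(ω) = inf({t ∈ (0, T] : M(ω, t) ≥ a} ∪ {T}). Then τ_a : E → ℝ is upper semicontinuous (equivalently, −τ_a is lower semicontinuous) and τ̲_a : E → ℝ is lower semicontinuous. -/

import Mathlib

/-- Semicontinuity of hitting times (Lemma A.1): if `M : E × [0,T] → ℝ` is jointly
continuous and `M(ω,0) < a`, then `τ_a = inf{t ∈ (0,T] : M(ω,t) > a} ∧ T` is upper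
semicontinuous and `τ̲_a = inf{t ∈ (0,T] : M(ω,t) ≥ a} ∧ T` is lower semicontinuous. -/
theorem hitting_times_semicontinuous
    {E : Type*} [MetricSpace E] (T a : ℝ) (hT : 0 < T) (M : E → ℝ → ℝ)
    (hM : ContinuousOn (fun p : E × ℝ => M p.1 p.2) (Set.univ ×ˢ Set.Icc 0 T))
    (h0 : ∀ ω : E, M ω 0 < a) :
    UpperSemicontinuous (fun ω : E => sInf ({t ∈ Set.Ioc 0 T | M ω t > a} ∪ {T})) ∧
      LowerSemicontinuous (fun ω : E => sInf ({t ∈ Set.Ioc 0 T | M ω t ≥ a} ∪ {T})) := by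
  -- Extend `M` to a globally continuous function `N` by clamping the time variable.
  set N : E → ℝ → ℝ := fun ω t => M ω (min (max t 0) T) with hNdef
  have hmaps : ∀ p : E × ℝ,
      (p.1, min (max p.2 0) T) ∈ (Set.univ ×ˢ Set.Icc 0 T : Set (E × ℝ)) := fun p =>
    ⟨trivial, ⟨le_min (le_max_right _ _) hT.le, min_le_right _ _⟩⟩
  have hN : Continuous fun p : E × ℝ => N p.1 p.2 := by
    rw [← continuousOn_univ]
    exact hM.comp
      (continuous_fst.prodMk
        ((continuous_snd.max continuous_const).min continuous_const)).continuousOn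
      (fun p _ => hmaps p)
  have hNeq : ∀ ω : E, ∀ t ∈ Set.Icc (0:ℝ) T, N ω t = M ω t := by
    intro ω t ht
    simp only [hNdef, max_eq_left ht.1, min_eq_left ht.2]
  have hsetgt : ∀ ω : E,
      ({t ∈ Set.Ioc 0 T | M ω t > a} : Set ℝ) = {t ∈ Set.Ioc 0 T | N ω t > a} := by
    intro ω
    ext t
    simp only [Set.mem_setOf_eq, and_congr_right_iff]
    intro ht
    rw [hNeq ω t ⟨ht.1.le, ht.2⟩]
  have hsetge : ∀ ω : E,
      ({t ∈ Set.Ioc 0 T | M ω t ≥ a} : Set ℝ) = {t ∈ Set.Ioc 0 T | N ω t ≥ a} := by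
    intro ω
    ext t
    simp only [Set.mem_setOf_eq, and_congr_right_iff]
    intro ht
    rw [hNeq ω t ⟨ht.1.le, ht.2⟩]
  have hbdd : ∀ (S : Set ℝ), S ⊆ Set.Ioc 0 T → BddBelow (S ∪ {T}) := by
    intro S hS
    refine ⟨0, fun x hx => ?_⟩
    rcases hx with hx | hx
    · exact (hS hx).1.le
    · rw [Set.mem_singleton_iff] at hx; rw [hx]; exact hT.le
  have hne : ∀ (S : Set ℝ), (S ∪ {T}).Nonempty := fun S => ⟨T, Or.inr rfl⟩
  constructor
  · -- upper semicontinuity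
    simp only [hsetgt]
    intro ω₀ y hy
    obtain ⟨s, hs, hsy⟩ := exists_lt_of_csInf_lt (hne _) hy
    rcases hs with hs | hs
    · -- s ∈ Ioc 0 T with N ω₀ s > a
      have hopen : IsOpen {ω : E | a < N ω s} :=
        isOpen_lt continuous_const (hN.comp (continuous_id.prodMk continuous_const))
      filter_upwards [hopen.mem_nhds hs.2] with ω hω
      calc sInf ({t ∈ Set.Ioc 0 T | N ω t > a} ∪ {T})
          ≤ s := csInf_le (hbdd _ (fun x hx => hx.1)) (Or.inl ⟨hs.1, hω⟩)
        _ < y := hsy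
    · rw [Set.mem_singleton_iff] at hs
      subst hs
      filter_upwards with ω
      calc sInf ({t ∈ Set.Ioc 0 s | N ω t > a} ∪ {s})
          ≤ s := csInf_le (hbdd _ (fun x hx => hx.1)) (Or.inr rfl)
        _ < y := hsy
  · -- lower semicontinuity
    simp only [hsetge]
    intro ω₀ y hy
    by_cases hy0 : y < 0
    · filter_upwards with ω
      refine lt_of_lt_of_le hy0 (le_csInf (hne _) fun x hx => ?_)
      rcases hx with hx | hx
      · exact hx.1.1.le
      · rw [Set.mem_singleton_iff] at hx; rw [hx]; exact hT.le
    push_neg at hy0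
    obtain ⟨y', hyy', hy'g⟩ := exists_between hy
    have hgT : sInf ({t ∈ Set.Ioc 0 T | N ω₀ t ≥ a} ∪ {T}) ≤ T :=
      csInf_le (hbdd _ (fun x hx => hx.1)) (Or.inr rfl)
    have hy'T : y' ≤ T := le_trans hy'g.le hgT
    have hlt : ∀ t ∈ Set.Icc (0:ℝ) y', N ω₀ t < a := by
      intro t ht
      rcases eq_or_lt_of_le ht.1 with h0t | h0t
      · rw [← h0t, hNeq ω₀ 0 ⟨le_refl 0, hT.le⟩]
        exact h0 ω₀
      · by_contra hcon
        push_neg at hcon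
        have : sInf ({t ∈ Set.Ioc 0 T | N ω₀ t ≥ a} ∪ {T}) ≤ t :=
          csInf_le (hbdd _ (fun x hx => hx.1)) (Or.inl ⟨⟨h0t, le_trans ht.2 hy'T⟩, hcon⟩)
        exact absurd (lt_of_le_of_lt (this.trans ht.2) hy'g) (lt_irrefl _)
    obtain ⟨u, v, hu, _, hωu, hKv, huv⟩ :=
      generalized_tube_lemma isCompact_singleton (isCompact_Icc (a := (0:ℝ)) (b := y'))
        (isOpen_lt hN continuous_const)
        (by
          rintro ⟨ω, t⟩ ⟨hω, ht⟩
          rw [Set.mem_singleton_iff] at hω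
          subst hω
          exact hlt t ht)
    filter_upwards [hu.mem_nhds (hωu rfl)] with ω hω
    refine lt_of_lt_of_le hyy' (le_csInf (hne _) fun x hx => ?_)
    rcases hx with hx | hx
    · by_contra h
      push_neg at h
      have hxv : x ∈ v := hKv ⟨hx.1.1.le, h.le⟩
      have : N ω x < a := huv (Set.mk_mem_prod hω hxv)
      exact absurd (lt_of_lt_of_le this hx.2) (lt_irrefl _)
    · rw [Set.mem_singleton_iff] at hx; rw [hx]; exact hy'T
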